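/- Let E be a real Banach space and let 𝓚 ⊆ E be a nonempty closed convex set. For every y ∈ 𝓚 the two descriptions of the tangent cone coincide: closure(⋃_{h>0} {h⁻¹ • (k − y) : k ∈ 𝓚}) = {v ∈ E : the quotient d(y + h•v, 𝓚)/h tends to 0 as h → 0⁺}, where d(z, 𝓚) denotes the infimum distance from z to 𝓚. -/

import Mathlib

open Filter Metric Set

/-- In a real Banach space, for a nonempty closed convex set `𝓚` and a point
`y ∈ 𝓚`, the two descriptions of the tangent cone coincide:
`cl (⋃_{h>0} h⁻¹ • (𝓚 - y)) = {v | d(y + h•v, 𝓚)/h → 0 as h → 0⁺}`. -/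
theorem tangent_cone_eq_limit_description
    {E : Type*} [NormedAddCommGroup E] [NormedSpace ℝ E] [CompleteSpace E]
    (𝓚 : Set E) (hne : 𝓚.Nonempty) (hcl : IsClosed 𝓚) (hconv : Convex ℝ 𝓚)
    (y : E) (hy : y ∈ 𝓚) :
    closure (⋃ h ∈ Set.Ioi (0:ℝ), (fun k => h⁻¹ • (k - y)) '' 𝓚) =
      {v : E | Filter.Tendsto (fun h : ℝ => Metric.infDist (y + h • v) 𝓚 / h)
        (nhdsWithin 0 (Set.Ioi 0)) (nhds 0)} := by
  set S : Set E := ⋃ h ∈ Set.Ioi (0:ℝ), (fun k => h⁻¹ • (k - y)) '' 𝓚 with hS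
  set T : Set E := {v : E | Filter.Tendsto (fun h : ℝ => Metric.infDist (y + h • v) 𝓚 / h)
        (nhdsWithin 0 (Set.Ioi 0)) (nhds 0)} with hT
  -- S ⊆ T
  have hST : S ⊆ T := by
    intro v hv
    simp only [hS, Set.mem_iUnion, Set.mem_image, Set.mem_Ioi] at hv
    obtain ⟨h₀, h₀pos, k, hk, rfl⟩ := hv
    have hzero : ∀ h ∈ Set.Ioo (0:ℝ) h₀,
        Metric.infDist (y + h • (h₀⁻¹ • (k - y))) 𝓚 / h = 0 := by
      intro h hh
      have ht0 : 0 ≤ h / h₀ := div_nonneg hh.1.le h₀pos.le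
      have ht1 : h / h₀ ≤ 1 := (div_le_one h₀pos).mpr hh.2.le
      have hmem : y + h • (h₀⁻¹ • (k - y)) ∈ 𝓚 := by
        have := hconv hy hk (by linarith : (0:ℝ) ≤ 1 - h / h₀) ht0 (by ring)
        have heq : (1 - h / h₀) • y + (h / h₀) • k = y + h • (h₀⁻¹ • (k - y)) := by
          rw [smul_smul, smul_sub, sub_smul, one_smul, div_eq_mul_inv]
          abel
        rwa [heq] at this
      rw [Metric.infDist_zero_of_mem hmem, zero_div]
    have hev : ∀ᶠ h in nhdsWithin (0:ℝ) (Set.Ioi 0),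
        Metric.infDist (y + h • (h₀⁻¹ • (k - y))) 𝓚 / h = 0 :=
      Filter.eventually_of_mem (Ioo_mem_nhdsGT_of_mem ⟨le_refl 0, h₀pos⟩) hzero
    exact Filter.Tendsto.congr' (hev.mono fun h hh => hh.symm) tendsto_const_nhds
  -- T is closed
  have hTclosed : IsClosed T := by
    rw [← closure_subset_iff_isClosed]
    intro v hv
    rw [hT, Set.mem_setOf_eq, Metric.tendsto_nhds]
    intro ε hε
    obtain ⟨w, hwT, hvw⟩ := Metric.mem_closure_iff.mp hv (ε / 2) (by linarith)
    have hev : ∀ᶠ h in nhdsWithin (0:ℝ) (Set.Ioi 0),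
        Metric.infDist (y + h • w) 𝓚 / h < ε / 2 :=
      hwT (Iio_mem_nhds (by linarith : (0:ℝ) < ε / 2))
    have hmem : ∀ᶠ h in nhdsWithin (0:ℝ) (Set.Ioi 0), h ∈ Set.Ioi (0:ℝ) :=
      Filter.eventually_of_mem self_mem_nhdsWithin fun h hh => hh
    filter_upwards [hev, hmem] with h hw hh
    have hpos : (0:ℝ) < h := hh
    have hle : Metric.infDist (y + h • v) 𝓚 ≤
        Metric.infDist (y + h • w) 𝓚 + dist (y + h • v) (y + h • w) :=
      Metric.infDist_le_infDist_add_dist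
    have hdisteq : dist (y + h • v) (y + h • w) = h * dist v w := by
      rw [dist_eq_norm, dist_eq_norm]
      have : y + h • v - (y + h • w) = h • (v - w) := by
        rw [smul_sub]; abel
      rw [this, norm_smul, Real.norm_eq_abs, abs_of_pos hpos]
    have h1 : Metric.infDist (y + h • v) 𝓚 ≤
        Metric.infDist (y + h • w) 𝓚 + h * dist v w := by
      rw [hdisteq] at hle; exact hle
    have hquot : Metric.infDist (y + h • v) 𝓚 / h ≤
        Metric.infDist (y + h • w) 𝓚 / h + dist v w := by
      calc Metric.infDist (y + h • v) 𝓚 / h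
          ≤ (Metric.infDist (y + h • w) 𝓚 + h * dist v w) / h := by gcongr
        _ = Metric.infDist (y + h • w) 𝓚 / h + dist v w := by field_simp
    rw [Real.dist_0_eq_abs, abs_of_nonneg (div_nonneg Metric.infDist_nonneg hpos.le)]
    linarith
  apply Set.Subset.antisymm
  · exact closure_minimal hST hTclosed
  · intro v hv
    rw [Metric.mem_closure_iff]
    intro ε hε
    have hev : ∀ᶠ h in nhdsWithin (0:ℝ) (Set.Ioi 0),
        Metric.infDist (y + h • v) 𝓚 / h < ε := hv (Iio_mem_nhds hε)
    have hmem : ∀ᶠ h in nhdsWithin (0:ℝ) (Set.Ioi 0), h ∈ Set.Ioi (0:ℝ) :=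
      Filter.eventually_of_mem self_mem_nhdsWithin fun h hh => hh
    obtain ⟨h, hlt, hh⟩ := (hev.and hmem).exists
    have hpos : (0:ℝ) < h := hh
    have hlt' : Metric.infDist (y + h • v) 𝓚 < ε * h := by
      rwa [div_lt_iff₀ hpos] at hlt
    obtain ⟨k, hk, hdk⟩ := (Metric.infDist_lt_iff hne).mp hlt'
    refine ⟨h⁻¹ • (k - y), ?_, ?_⟩
    · simp only [hS, Set.mem_iUnion, Set.mem_image, Set.mem_Ioi]
      exact ⟨h, hpos, k, hk, rfl⟩
    · have heq : v - h⁻¹ • (k - y) = h⁻¹ • (y + h • v - k) := by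
        rw [smul_sub, smul_sub, smul_add, smul_smul, inv_mul_cancel₀ (ne_of_gt hpos), one_smul]
        abel
      rw [dist_eq_norm, heq, norm_smul, Real.norm_eq_abs, abs_of_pos (inv_pos.mpr hpos)]
      calc h⁻¹ * ‖y + h • v - k‖ < h⁻¹ * (ε * h) := by
            apply mul_lt_mul_of_pos_left _ (inv_pos.mpr hpos)
            rwa [dist_eq_norm] at hdk
        _ = ε := by field_simp
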